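/- arXiv:2107.08154 — 2 statements merged into one kernel-verified Lean document; each statement's English description precedes it below -/
import Mathlib

section
/- Suppose G is a multigraph with a pendant vertex v of degree k ≥ 1, and let G' = G - v. Then for every m ≥ k, P*_DP(G,m) = (m-1)·P*_DP(G',m). -/
/-- A finite-multiplicity loopless multigraph on vertex set `V`:
`mult u v` is the number of parallel edges joining `u` and `v`. -/
structure Multigraph (V : Type) where
  mult : V → V → ℕ
  symm : ∀ u v, mult u v = mult v u
  loopless : ∀ v, mult v v = 0

/-- A full `m`-fold cover of a multigraph `G`.  The list of a vertex `u` is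
identified with `{u} × Fin m`; for each ordered pair `(u,v)` and each edge index
`i` (only indices `i < G.mult u v` are relevant) the corresponding perfect
matching between the two lists is recorded as a permutation of `Fin m`, the two
orientations of an edge giving inverse permutations. -/
structure FullCover {V : Type} (G : Multigraph V) (m : ℕ) where
  perm : V → V → ℕ → (Fin m ≃ Fin m)
  compat : ∀ u v i, perm v u i = (perm u v i).symm

/-- `f` (choosing one list element per vertex) is an `H`-coloring: it avoids all
cross edges of the cover. -/
def FullCover.IsColoring {V : Type} {G : Multigraph V} {m : ℕ}
    (c : FullCover G m) (f : V → Fin m) : Prop :=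
  ∀ u v i, i < G.mult u v → (c.perm u v i) (f u) ≠ f v

/-- The number of `H`-colorings of `G` for the cover `c`. -/
noncomputable def FullCover.numColorings {V : Type} {G : Multigraph V} {m : ℕ}
    (c : FullCover G m) : ℕ :=
  Nat.card {f : V → Fin m // c.IsColoring f}

/-- The DP color function: the minimum number of colorings over all full
`m`-fold covers. -/
noncomputable def Multigraph.PDP {V : Type} (G : Multigraph V) (m : ℕ) : ℕ :=
  sInf {n | ∃ c : FullCover G m, n = c.numColorings}

/-- The dual DP color function: the maximum number of colorings over all full
`m`-fold covers. -/
noncomputable def Multigraph.PDPdual {V : Type} (G : Multigraph V) (m : ℕ) : ℕ :=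
  sSup {n | ∃ c : FullCover G m, n = c.numColorings}

/-- The number of proper `m`-colorings of (the underlying graph of) `G`. -/
noncomputable def Multigraph.properCount {V : Type} (G : Multigraph V) (m : ℕ) : ℕ :=
  Nat.card {f : V → Fin m // ∀ u v, 0 < G.mult u v → f u ≠ f v}

/-- The multigraph obtained from `G` by deleting the vertex `v` (and all edges
incident to it). -/
def Multigraph.deleteVertex {V : Type} (G : Multigraph V) (v : V) :
    Multigraph {x : V // x ≠ v} where
  mult a b := G.mult a.1 b.1
  symm := by intro a b; (try dsimp only); rw [G.symm]
  loopless := by intro a; (try dsimp only); rw [G.loopless]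

/-- Restriction of a cover of `G` to a cover of `G - v`. -/
def FullCover.restrict {V : Type} {G : Multigraph V} {m : ℕ}
    (c : FullCover G m) (v : V) : FullCover (G.deleteVertex v) m where
  perm a b i := c.perm a.1 b.1 i
  compat a b i := c.compat a.1 b.1 i

/-- Extension of a cover of `G - v` to a cover of `G`, using identity matchings
on all edges incident to `v`. -/
noncomputable def FullCover.extend {V : Type} [DecidableEq V] {G : Multigraph V} {m : ℕ}
    (v : V) (c' : FullCover (G.deleteVertex v) m) : FullCover G m where
  perm a b i := if h : a ≠ v ∧ b ≠ v then c'.perm ⟨a, h.1⟩ ⟨b, h.2⟩ i else Equiv.refl _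
  compat a b i := by
    by_cases h : a ≠ v ∧ b ≠ v
    · rw [dif_pos h, dif_pos (And.intro h.2 h.1)]
      exact c'.compat ⟨a, h.1⟩ ⟨b, h.2⟩ i
    · have h' : ¬ (b ≠ v ∧ a ≠ v) := fun hh => h ⟨hh.2, hh.1⟩
      rw [dif_neg h', dif_neg h]
      rfl

/-- `{a : Fin m // a ≠ x}` is equivalent to `Fin (m-1)`. -/
noncomputable def neEquivFin (m : ℕ) (x : Fin m) : {a : Fin m // a ≠ x} ≃ Fin (m - 1) := by
  apply Fintype.equivOfCardEq
  have h1 : Fintype.card {a : Fin m // a = x} = 1 := Fintype.card_subtype_eq x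
  have := Fintype.card_subtype_compl (fun a : Fin m => a = x)
  simp only [Fintype.card_fin, h1] at this
  simpa using this

lemma natCard_ne (m : ℕ) (x : Fin m) : Nat.card {a : Fin m // a ≠ x} = m - 1 := by
  rw [Nat.card_congr (neEquivFin m x), Nat.card_eq_fintype_card, Fintype.card_fin]

section Pendant

variable {V : Type} [Fintype V] [DecidableEq V]
  (G : Multigraph V) (u v : V) (k : ℕ) (hk : 1 ≤ k) (huv : u ≠ v)
  (hdeg : G.mult v u = k) (hpend : ∀ w, w ≠ u → G.mult v w = 0)
  (m : ℕ) (hm : k ≤ m)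

include hk huv hdeg hpend

/-- Upper bound: any cover of `G` has at most `(m-1)` times the colorings of its
restriction to `G - v`. -/
lemma upper (c : FullCover G m) :
    c.numColorings ≤ (c.restrict v).numColorings * (m - 1) := by
  classical
  have hmuv : G.mult u v = k := by rw [G.symm]; exact hdeg
  -- target sigma type
  let T := {g : {x : V // x ≠ v} → Fin m // (c.restrict v).IsColoring g}
  let x : T → Fin m := fun g => c.perm u v 0 (g.1 ⟨u, huv⟩)
  have hF : ∀ f : {f : V → Fin m // c.IsColoring f},
      (c.restrict v).IsColoring (fun y => f.1 y.1) :=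
    fun f a b i hi => f.2 a.1 b.1 i hi
  have hFv : ∀ f : {f : V → Fin m // c.IsColoring f},
      f.1 v ≠ x ⟨fun y => f.1 y.1, hF f⟩ :=
    fun f => Ne.symm (f.2 u v 0 (by rw [hmuv]; exact hk))
  have key : c.numColorings ≤ Nat.card ((g : T) × {a : Fin m // a ≠ x g}) := by
    apply Nat.card_le_card_of_injective
      (f := fun f => ⟨⟨fun y => f.1 y.1, hF f⟩, ⟨f.1 v, hFv f⟩⟩)
    intro f f' h
    have h1 : (fun y : {x : V // x ≠ v} => f.1 y.1) = fun y => f'.1 y.1 :=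
      congrArg (fun p => p.1.1) h
    have h2 : f.1 v = f'.1 v := congrArg (fun p => p.2.1) h
    apply Subtype.ext
    funext y
    by_cases hy : y = v
    · rw [hy]; exact h2
    · exact congrFun h1 ⟨y, hy⟩
  calc c.numColorings ≤ Nat.card ((g : T) × {a : Fin m // a ≠ x g}) := key
    _ = (c.restrict v).numColorings * (m - 1) := by
        rw [Nat.card_congr ((Equiv.sigmaCongrRight fun g => neEquivFin m (x g)).trans
          (Equiv.sigmaEquivProd T (Fin (m - 1)))), Nat.card_prod,
          Nat.card_eq_fintype_card (α := Fin (m-1)), Fintype.card_fin]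
        rfl

/-- Lower bound: the identity extension of a cover of `G - v` has exactly
`(m-1)` times as many colorings. -/
lemma lower (c' : FullCover (G.deleteVertex v) m) :
    (FullCover.extend v c').numColorings = c'.numColorings * (m - 1) := by
  classical
  have hmuv : G.mult u v = k := by rw [G.symm]; exact hdeg
  set c := FullCover.extend (G := G) v c' with hc
  let T := {g : {x : V // x ≠ v} → Fin m // c'.IsColoring g}
  have hperm_uv : ∀ i, c.perm u v i = Equiv.refl _ := by
    intro i
    have : ¬ (u ≠ v ∧ v ≠ v) := fun hh => hh.2 rfl
    simp only [hc, FullCover.extend, dif_neg this]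
  have hperm_vu : ∀ i, c.perm v u i = Equiv.refl _ := by
    intro i
    have : ¬ (v ≠ v ∧ u ≠ v) := fun hh => hh.1 rfl
    simp only [hc, FullCover.extend, dif_neg this]
  have E : {f : V → Fin m // c.IsColoring f} ≃ (g : T) × {a : Fin m // a ≠ g.1 ⟨u, huv⟩} := by
    refine ⟨fun f => ⟨⟨fun y => f.1 y.1, ?_⟩, ⟨f.1 v, ?_⟩⟩,
      fun p => ⟨fun y => if h : y = v then p.2.1 else p.1.1 ⟨y, h⟩, ?_⟩, ?_, ?_⟩
    · intro a b i hi
      have := f.2 a.1 b.1 i hi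
      have hab : a.1 ≠ v ∧ b.1 ≠ v := ⟨a.2, b.2⟩
      simpa only [hc, FullCover.extend, dif_pos hab] using this
    · have := f.2 u v 0 (by rw [hmuv]; exact hk)
      rw [hperm_uv 0] at this
      exact Ne.symm this
    · -- the extended function is a coloring
      intro a b i hi
      rcases eq_or_ne a v with ha | ha
      · rcases eq_or_ne b v with hb | hb
        · exfalso; rw [ha, hb, G.loopless] at hi; exact absurd hi (by omega)
        · rcases eq_or_ne b u with hbu | hbu
          · subst ha; subst hbu
            rw [hperm_vu i]
            simp only [Equiv.refl_apply, dif_pos rfl, dif_neg huv]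
            exact p.2.2
          · exfalso; rw [ha, hpend b hbu] at hi; exact absurd hi (by omega)
      · rcases eq_or_ne b v with hb | hb
        · rcases eq_or_ne a u with hau | hau
          · subst hb; subst hau
            rw [hperm_uv i]
            simp only [Equiv.refl_apply, dif_pos rfl, dif_neg huv]
            exact Ne.symm p.2.2
          · exfalso
            rw [hb, G.symm, hpend a hau] at hi; exact absurd hi (by omega)
        · have hab : a ≠ v ∧ b ≠ v := ⟨ha, hb⟩
          simp only [hc, FullCover.extend, dif_neg ha, dif_neg hb, dif_pos hab]
          exact p.1.2 ⟨a, ha⟩ ⟨b, hb⟩ i hi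
    · intro f
      apply Subtype.ext
      funext y
      by_cases hy : y = v
      · subst hy; exact dif_pos rfl
      · exact dif_neg hy
    · intro p
      apply Sigma.ext
      · apply Subtype.ext
        funext y
        exact dif_neg y.2
      · apply (Subtype.heq_iff_coe_eq ?_).mpr
        · exact dif_pos rfl
        · intro a
          dsimp only
          rw [dif_neg huv]
  rw [FullCover.numColorings, Nat.card_congr E,
    Nat.card_congr ((Equiv.sigmaCongrRight fun g => neEquivFin m (g.1 ⟨u, huv⟩)).trans
      (Equiv.sigmaEquivProd T (Fin (m - 1)))), Nat.card_prod,
    Nat.card_eq_fintype_card (α := Fin (m-1)), Fintype.card_fin]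
  rfl

end Pendant

lemma numColorings_le_pow {V : Type} [Fintype V] {G : Multigraph V} {m : ℕ}
    (c : FullCover G m) : c.numColorings ≤ m ^ Fintype.card V := by
  have := Nat.card_le_card_of_injective (f := fun f : {f : V → Fin m // c.IsColoring f} => f.1)
    Subtype.val_injective
  simpa [FullCover.numColorings, Nat.card_fun] using this

/-- If `v` is a pendant vertex of degree `k ≥ 1` in the multigraph `G` and
`G' = G - v`, then for every `m ≥ k`, `P*_DP(G,m) = (m-1)·P*_DP(G',m)`. -/
theorem PDPdual_pendant {V : Type} [Fintype V] [DecidableEq V]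
    (G : Multigraph V) (u v : V) (k : ℕ) (hk : 1 ≤ k) (huv : u ≠ v)
    (hdeg : G.mult v u = k) (hpend : ∀ w, w ≠ u → G.mult v w = 0)
    (m : ℕ) (hm : k ≤ m) :
    G.PDPdual m = (m - 1) * (G.deleteVertex v).PDPdual m := by
  classical
  set S := {n | ∃ c : FullCover G m, n = c.numColorings} with hS
  set S' := {n | ∃ c : FullCover (G.deleteVertex v) m, n = c.numColorings} with hS'
  have hbdd : BddAbove S := ⟨m ^ Fintype.card V, by rintro n ⟨c, rfl⟩; exact numColorings_le_pow c⟩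
  have hbdd' : BddAbove S' := ⟨m ^ Fintype.card {x : V // x ≠ v}, by
    rintro n ⟨c, rfl⟩; exact numColorings_le_pow c⟩
  have hne : S.Nonempty := ⟨_, ⟨⟨fun _ _ _ => Equiv.refl _, fun _ _ _ => rfl⟩, rfl⟩⟩
  have hne' : S'.Nonempty := ⟨_, ⟨⟨fun _ _ _ => Equiv.refl _, fun _ _ _ => rfl⟩, rfl⟩⟩
  obtain ⟨c', hc'⟩ := Nat.sSup_mem hne' hbdd'
  show sSup S = (m - 1) * sSup S'
  apply le_antisymm
  · apply csSup_le hne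
    rintro n ⟨c, rfl⟩
    calc c.numColorings ≤ (c.restrict v).numColorings * (m - 1) :=
          upper G u v k hk huv hdeg hpend m c
      _ ≤ sSup S' * (m - 1) :=
          Nat.mul_le_mul_right _ (le_csSup hbdd' ⟨c.restrict v, rfl⟩)
      _ = (m - 1) * sSup S' := mul_comm _ _
  · rw [hc', mul_comm, ← lower G u v k hk huv hdeg hpend m c']
    exact le_csSup hbdd ⟨_, rfl⟩
end

section
/- For every multigraph G and every edge e with endpoints u,v such that e is the unique edge between u and v, and every m ∈ ℕ: P*_DP(G,m) ≤ P*_DP(G-e,m) - P_DP(G·e,m). -/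
/-- The multigraph obtained from `G` by deleting one of the edges joining
`u` and `v`. -/
def Multigraph.deleteEdge {V : Type} [DecidableEq V] (G : Multigraph V) (u v : V) :
    Multigraph V where
  mult x y := if (x = u ∧ y = v) ∨ (x = v ∧ y = u) then G.mult x y - 1 else G.mult x y
  symm := by
    intro x y
    try dsimp only
    by_cases h : (x = u ∧ y = v) ∨ (x = v ∧ y = u)
    · rw [if_pos h, if_pos (by tauto), G.symm]
    · rw [if_neg h, if_neg (by tauto), G.symm]
  loopless := by
    intro x
    try dsimp only
    by_cases h : (x = u ∧ x = v) ∨ (x = v ∧ x = u)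
    · rw [if_pos h, G.loopless]
    · rw [if_neg h, G.loopless]

/-- The multigraph obtained from `G` by contracting an edge joining `u` and `v`:
the vertex `v` is removed, the merged vertex is `u`, loops created at the merged
vertex are deleted, and all other parallel edges are retained. -/
def Multigraph.contractEdge {V : Type} [DecidableEq V] (G : Multigraph V) (u v : V) :
    Multigraph {x : V // x ≠ v} where
  mult x y :=
    if x.1 = u ∧ y.1 = u then 0
    else if x.1 = u then G.mult u y.1 + G.mult v y.1
    else if y.1 = u then G.mult x.1 u + G.mult x.1 v
    else G.mult x.1 y.1
  symm := by
    intro x y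
    try dsimp only
    by_cases h1 : x.1 = u <;> by_cases h2 : y.1 = u <;>
      simp only [h1, h2, and_true, and_false, true_and, false_and, if_true, if_false,
        ite_true, ite_false, if_pos, if_neg, not_false_iff] <;>
      first
        | rfl
        | (rw [G.symm u, G.symm v])
        | rw [G.symm]
  loopless := by
    intro x
    try dsimp only
    by_cases h : x.1 = u
    · rw [if_pos ⟨h, h⟩]
    · rw [if_neg (by tauto), if_neg h, if_neg h, G.loopless]

/-- The cover of `G - e` induced by a cover of `G`, where `e` is the `i`-th edge
joining `u` and `v`: the matching of `e` is deleted and the remaining matchings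
between the lists of `u` and `v` are reindexed. -/
def FullCover.deleteEdge {V : Type} [DecidableEq V] {G : Multigraph V} {m : ℕ}
    (c : FullCover G m) (u v : V) (i : ℕ) : FullCover (G.deleteEdge u v) m where
  perm x y j :=
    if (x = u ∧ y = v) ∨ (x = v ∧ y = u) then
      c.perm x y (if j < i then j else j + 1)
    else c.perm x y j
  compat := by
    intro x y j
    try dsimp only
    by_cases h : (x = u ∧ y = v) ∨ (x = v ∧ y = u)
    · rw [if_pos (by tauto), if_pos h, c.compat]
    · rw [if_neg (by tauto), if_neg h, c.compat]

/-- The cover of `G · e` induced by a cover of `G`, where `e` is the `i`-th edge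
joining `u` and `v`: the lists of `u` and `v` are merged along the matching of
`e` (with the merged vertex labelled `u`), and all other matchings are carried
over accordingly. -/
def FullCover.contractEdge {V : Type} [DecidableEq V] {G : Multigraph V} {m : ℕ}
    (c : FullCover G m) (u v : V) (i : ℕ) : FullCover (G.contractEdge u v) m where
  perm x y j :=
    if x.1 = u ∧ y.1 = u then Equiv.refl _
    else if x.1 = u then
      (if j < G.mult u y.1 then c.perm u y.1 j
       else (c.perm u v i).trans (c.perm v y.1 (j - G.mult u y.1)))
    else if y.1 = u then
      (if j < G.mult x.1 u then c.perm x.1 u j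
       else (c.perm x.1 v (j - G.mult x.1 u)).trans (c.perm u v i).symm)
    else c.perm x.1 y.1 j
  compat := by
    intro x y j
    try dsimp only
    by_cases h1 : x.1 = u <;> by_cases h2 : y.1 = u <;>
      simp only [h1, h2, and_true, and_false, true_and, false_and, if_true, if_false,
        ite_true, ite_false, not_false_iff]
    · rfl
    · rw [G.symm y.1 u]
      by_cases hj : j < G.mult u y.1
      · rw [if_pos hj, if_pos hj, c.compat]
      · rw [if_neg hj, if_neg hj, c.compat]
        rfl
    · rw [G.symm x.1 u]
      by_cases hj : j < G.mult u x.1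
      · rw [if_pos hj, if_pos hj, c.compat]
      · rw [if_neg hj, if_neg hj, c.compat x.1 v (j - G.mult u x.1)]
        rfl
    · rw [c.compat]

private def extendFun {V : Type} [DecidableEq V] {m : ℕ} (π : Fin m ≃ Fin m)
    (u v : V) (hne : u ≠ v) (g : {x : V // x ≠ v} → Fin m) (x : V) : Fin m :=
  if h : x = v then π (g ⟨u, hne⟩) else g ⟨x, h⟩

private lemma key_count {V : Type} [Fintype V] [DecidableEq V] (G : Multigraph V)
    (u v : V) (he : G.mult u v = 1) (m : ℕ) (c : FullCover G m) :
    (c.deleteEdge u v 0).numColorings =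
      c.numColorings + (c.contractEdge u v 0).numColorings := by
  classical
  have hne : u ≠ v := by
    intro h
    rw [h, G.loopless] at he
    exact absurd he (by norm_num)
  have hvu : G.mult v u = 1 := (G.symm v u).trans he
  have cmult : ∀ x y : {z : V // z ≠ v}, (G.contractEdge u v).mult x y =
      (if x.1 = u ∧ y.1 = u then 0
       else if x.1 = u then G.mult u y.1 + G.mult v y.1
       else if y.1 = u then G.mult x.1 u + G.mult x.1 v
       else G.mult x.1 y.1) := fun _ _ => rfl
  have cperm : ∀ (x y : {z : V // z ≠ v}) (j : ℕ), (c.contractEdge u v 0).perm x y j =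
      (if x.1 = u ∧ y.1 = u then Equiv.refl _
       else if x.1 = u then
         (if j < G.mult u y.1 then c.perm u y.1 j
          else (c.perm u v 0).trans (c.perm v y.1 (j - G.mult u y.1)))
       else if y.1 = u then
         (if j < G.mult x.1 u then c.perm x.1 u j
          else (c.perm x.1 v (j - G.mult x.1 u)).trans (c.perm u v 0).symm)
       else c.perm x.1 y.1 j) := fun _ _ _ => rfl
  have cmult2 : ∀ (x y : V) (hx : x ≠ v) (hy : y ≠ v),
      (G.contractEdge u v).mult ⟨x, hx⟩ ⟨y, hy⟩ =
      (if x = u ∧ y = u then 0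
       else if x = u then G.mult u y + G.mult v y
       else if y = u then G.mult x u + G.mult x v
       else G.mult x y) := fun _ _ _ _ => rfl
  have cperm2 : ∀ (x y : V) (hx : x ≠ v) (hy : y ≠ v) (j : ℕ),
      (c.contractEdge u v 0).perm ⟨x, hx⟩ ⟨y, hy⟩ j =
      (if x = u ∧ y = u then Equiv.refl _
       else if x = u then
         (if j < G.mult u y then c.perm u y j
          else (c.perm u v 0).trans (c.perm v y (j - G.mult u y)))
       else if y = u then
         (if j < G.mult x u then c.perm x u j
          else (c.perm x v (j - G.mult x u)).trans (c.perm u v 0).symm)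
       else c.perm x y j) := fun _ _ _ _ _ => rfl
  -- characterization of colorings of the deleted cover
  have hdel : ∀ f : V → Fin m, (c.deleteEdge u v 0).IsColoring f ↔
      ∀ x y j, ¬((x = u ∧ y = v) ∨ (x = v ∧ y = u)) → j < G.mult x y →
        c.perm x y j (f x) ≠ f y := by
    intro f
    constructor
    · intro hf x y j hp hj
      have h := hf x y j (by simpa [Multigraph.deleteEdge, if_neg hp] using hj)
      simpa [FullCover.deleteEdge, if_neg hp] using h
    · intro hf x y j hj
      by_cases hp : (x = u ∧ y = v) ∨ (x = v ∧ y = u)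
      · exfalso
        have hxy : G.mult x y = 1 := by
          rcases hp with ⟨hx, hy⟩ | ⟨hx, hy⟩ <;> subst hx <;> subst hy <;> assumption
        simp only [Multigraph.deleteEdge, if_pos hp, hxy] at hj
        omega
      · have h := hf x y j hp (by simpa [Multigraph.deleteEdge, if_neg hp] using hj)
        simpa [FullCover.deleteEdge, if_neg hp] using h
  -- characterization of colorings of c
  have hcchar : ∀ f : V → Fin m, c.IsColoring f ↔
      ((∀ x y j, ¬((x = u ∧ y = v) ∨ (x = v ∧ y = u)) → j < G.mult x y →
        c.perm x y j (f x) ≠ f y) ∧ c.perm u v 0 (f u) ≠ f v) := by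
    intro f
    constructor
    · intro hf
      exact ⟨fun x y j _ hj => hf x y j hj, hf u v 0 (by omega)⟩
    · rintro ⟨hf, hne'⟩ x y j hj
      by_cases hp : (x = u ∧ y = v) ∨ (x = v ∧ y = u)
      · rcases hp with ⟨hx, hy⟩ | ⟨hx, hy⟩
        · subst hx; subst hy
          have hj0 : j = 0 := by omega
          subst hj0; exact hne'
        · subst hx; subst hy
          have hj0 : j = 0 := by omega
          subst hj0
          rw [c.compat]
          intro h
          apply hne'
          rw [← h]
          simp
      · exact hf x y j hp hj
  -- restriction gives a coloring of the contracted cover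
  have hA : ∀ f : V → Fin m,
      (∀ x y j, ¬((x = u ∧ y = v) ∨ (x = v ∧ y = u)) → j < G.mult x y →
        c.perm x y j (f x) ≠ f y) → c.perm u v 0 (f u) = f v →
      (c.contractEdge u v 0).IsColoring (fun x => f x.1) := by
    intro f hf heq x y j hj
    rw [cmult x y] at hj
    rw [cperm x y j]
    by_cases hx : x.1 = u <;> by_cases hy : y.1 = u
    · rw [if_pos ⟨hx, hy⟩] at hj
      exact absurd hj (Nat.not_lt_zero j)
    · rw [if_neg (fun h => hy h.2), if_pos hx] at hj
      rw [if_neg (fun h => hy h.2), if_pos hx]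
      by_cases hjy : j < G.mult u y.1
      · rw [if_pos hjy]
        have h := hf u y.1 j (by rintro (⟨-, h⟩ | ⟨h, -⟩); exacts [y.2 h, hne h]) hjy
        simpa [hx] using h
      · rw [if_neg hjy]
        have hj2 : j - G.mult u y.1 < G.mult v y.1 := by omega
        have h := hf v y.1 (j - G.mult u y.1)
          (by rintro (⟨h, -⟩ | ⟨-, h⟩); exacts [hne h.symm, hy h]) hj2
        simp only [Equiv.trans_apply]
        rw [hx, heq]
        exact h
    · rw [if_neg (fun h => hx h.1), if_neg hx, if_pos hy] at hj
      rw [if_neg (fun h => hx h.1), if_neg hx, if_pos hy]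
      by_cases hjx : j < G.mult x.1 u
      · rw [if_pos hjx]
        have h := hf x.1 u j (by rintro (⟨h, -⟩ | ⟨h, -⟩); exacts [hx h, x.2 h]) hjx
        simpa [hy] using h
      · rw [if_neg hjx]
        have hj2 : j - G.mult x.1 u < G.mult x.1 v := by omega
        have h := hf x.1 v (j - G.mult x.1 u)
          (by rintro (⟨h, -⟩ | ⟨h, -⟩); exacts [hx h, x.2 h]) hj2
        simp only [Equiv.trans_apply]
        rw [hy]
        intro hcontra
        apply h
        rw [← heq, ← hcontra]
        simp
    · rw [if_neg (fun h => hx h.1), if_neg hx, if_neg hy] at hj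
      rw [if_neg (fun h => hx h.1), if_neg hx, if_neg hy]
      have h := hf x.1 y.1 j
        (by rintro (⟨h, -⟩ | ⟨h, -⟩); exacts [hx h, x.2 h]) hj
      simpa using h
  -- basic facts about extendFun
  have hfv : ∀ g : {x : V // x ≠ v} → Fin m,
      extendFun (c.perm u v 0) u v hne g v = c.perm u v 0 (g ⟨u, hne⟩) :=
    fun g => dif_pos rfl
  have hfx : ∀ (g : {x : V // x ≠ v} → Fin m) (x : V) (h : x ≠ v),
      extendFun (c.perm u v 0) u v hne g x = g ⟨x, h⟩ := fun g x h => dif_neg h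
  -- extension of a contract coloring avoids all edges other than the (u,v) one
  have hD : ∀ g : {x : V // x ≠ v} → Fin m, (c.contractEdge u v 0).IsColoring g →
      ∀ x y j, ¬((x = u ∧ y = v) ∨ (x = v ∧ y = u)) → j < G.mult x y →
        c.perm x y j (extendFun (c.perm u v 0) u v hne g x) ≠
          extendFun (c.perm u v 0) u v hne g y := by
    intro g hg x y j hp hj
    by_cases hxv : x = v <;> by_cases hyv : y = v
    · rw [hxv, hyv, G.loopless] at hj
      exact absurd hj (Nat.not_lt_zero j)
    · -- x = v
      have hyu : y ≠ u := fun h => hp (Or.inr ⟨hxv, h⟩)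
      rw [hxv] at hj ⊢
      have hk := hg ⟨u, hne⟩ ⟨y, hyv⟩ (G.mult u y + j)
        (by rw [cmult2 u y hne hyv, if_neg (fun h => hyu h.2), if_pos rfl]; omega)
      rw [cperm2 u y hne hyv, if_neg (fun h => hyu h.2), if_pos rfl,
        if_neg (show ¬(G.mult u y + j < G.mult u y) by omega),
        show G.mult u y + j - G.mult u y = j by omega] at hk
      simp only [Equiv.trans_apply] at hk
      rw [hfv g, hfx g y hyv]
      exact hk
    · -- y = v
      have hxu : x ≠ u := fun h => hp (Or.inl ⟨h, hyv⟩)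
      rw [hyv] at hj ⊢
      have hk := hg ⟨x, hxv⟩ ⟨u, hne⟩ (G.mult x u + j)
        (by rw [cmult2 x u hxv hne, if_neg (fun h => hxu h.1), if_neg hxu, if_pos rfl]; omega)
      rw [cperm2 x u hxv hne, if_neg (fun h => hxu h.1), if_neg hxu, if_pos rfl,
        if_neg (show ¬(G.mult x u + j < G.mult x u) by omega),
        show G.mult x u + j - G.mult x u = j by omega] at hk
      simp only [Equiv.trans_apply] at hk
      rw [hfx g x hxv, hfv g]
      intro hco
      apply hk
      rw [hco]
      simp
    · -- x ≠ v, y ≠ v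
      by_cases hxu : x = u <;> by_cases hyu : y = u
      · rw [hxu, hyu, G.loopless] at hj
        exact absurd hj (Nat.not_lt_zero j)
      · rw [hxu] at hj ⊢
        have hk := hg ⟨u, hne⟩ ⟨y, hyv⟩ j
          (by rw [cmult2 u y hne hyv, if_neg (fun h => hyu h.2), if_pos rfl]; omega)
        rw [cperm2 u y hne hyv, if_neg (fun h => hyu h.2), if_pos rfl, if_pos hj] at hk
        rw [hfx g u hne, hfx g y hyv]
        exact hk
      · rw [hyu] at hj ⊢
        have hk := hg ⟨x, hxv⟩ ⟨u, hne⟩ j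
          (by rw [cmult2 x u hxv hne, if_neg (fun h => hxu h.1), if_neg hxu, if_pos rfl]; omega)
        rw [cperm2 x u hxv hne, if_neg (fun h => hxu h.1), if_neg hxu, if_pos rfl,
          if_pos hj] at hk
        rw [hfx g x hxv, hfx g u hne]
        exact hk
      · have hk := hg ⟨x, hxv⟩ ⟨y, hyv⟩ j
          (by rw [cmult2 x y hxv hyv, if_neg (fun h => hxu h.1), if_neg hxu, if_neg hyu]
              exact hj)
        rw [cperm2 x y hxv hyv, if_neg (fun h => hxu h.1), if_neg hxu, if_neg hyu] at hk
        rw [hfx g x hxv, hfx g y hyv]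
        exact hk
  -- the bijection
  have e : {f : V → Fin m // (c.deleteEdge u v 0).IsColoring f} ≃
      ({f : V → Fin m // c.IsColoring f} ⊕
        {g : {x : V // x ≠ v} → Fin m // (c.contractEdge u v 0).IsColoring g}) :=
  { toFun := fun f =>
      if h : c.perm u v 0 (f.1 u) = f.1 v then
        Sum.inr ⟨fun x => f.1 x.1, hA f.1 ((hdel f.1).1 f.2) h⟩
      else Sum.inl ⟨f.1, (hcchar f.1).2 ⟨(hdel f.1).1 f.2, h⟩⟩
    invFun := Sum.elim
      (fun f => ⟨f.1, (hdel f.1).2 ((hcchar f.1).1 f.2).1⟩)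
      (fun g => ⟨extendFun (c.perm u v 0) u v hne g.1, (hdel _).2 (hD g.1 g.2)⟩)
    left_inv := by
      rintro ⟨f, hf⟩
      by_cases h : c.perm u v 0 (f u) = f v
      · simp only [dif_pos h, Sum.elim_inr]
        refine Subtype.ext (funext fun x => ?_)
        show extendFun (c.perm u v 0) u v hne (fun z => f z.1) x = f x
        by_cases hxv : x = v
        · subst hxv
          rw [hfv]
          exact h
        · exact hfx _ x hxv
      · simp only [dif_neg h, Sum.elim_inl]
    right_inv := by
      rintro (⟨f, hf⟩ | ⟨g, hg⟩)
      · simp only [Sum.elim_inl]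
        exact dif_neg ((hcchar f).1 hf).2
      · simp only [Sum.elim_inr]
        have hcond : c.perm u v 0 (extendFun (c.perm u v 0) u v hne g u)
            = extendFun (c.perm u v 0) u v hne g v := by
          rw [hfx g u hne, hfv g]
        refine (dif_pos hcond).trans ?_
        refine congrArg Sum.inr (Subtype.ext (funext fun x => ?_))
        show extendFun (c.perm u v 0) u v hne g x.1 = g x
        rw [hfx g x.1 x.2]
    }
  rw [FullCover.numColorings, FullCover.numColorings, FullCover.numColorings,
    Nat.card_congr e, Nat.card_sum]

private lemma bddAboveCovers {V : Type} [Fintype V] (G : Multigraph V) (m : ℕ) :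
    BddAbove {n | ∃ c : FullCover G m, n = c.numColorings} := by
  refine ⟨Nat.card (V → Fin m), ?_⟩
  rintro n ⟨c, rfl⟩
  exact Finite.card_subtype_le _

/-- Deletion-contraction upper bound for the dual DP color function: if `e` is
the unique edge joining `u` and `v` in the multigraph `G`, then for every `m`,
`P*_DP(G,m) ≤ P*_DP(G-e,m) - P_DP(G·e,m)`. -/
theorem PDPdual_deletion_contraction_upper {V : Type} [Fintype V] [DecidableEq V]
    (G : Multigraph V) (u v : V) (he : G.mult u v = 1) (m : ℕ) :
    (G.PDPdual m : ℤ) ≤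
      ((G.deleteEdge u v).PDPdual m : ℤ) - ((G.contractEdge u v).PDP m : ℤ) := by
  classical
  have hne0 : {n | ∃ c : FullCover G m, n = c.numColorings}.Nonempty := by
    refine ⟨_, ⟨⟨fun _ _ _ => Equiv.refl _, fun _ _ _ => ?_⟩, rfl⟩⟩
    exact (Equiv.ext fun x => rfl)
  obtain ⟨c, hc⟩ := Nat.sSup_mem hne0 (bddAboveCovers G m)
  have hkey := key_count G u v he m c
  have h1 : (c.deleteEdge u v 0).numColorings ≤ (G.deleteEdge u v).PDPdual m :=
    le_csSup (bddAboveCovers _ m) ⟨_, rfl⟩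
  have h2 : (G.contractEdge u v).PDP m ≤ (c.contractEdge u v 0).numColorings :=
    Nat.sInf_le ⟨_, rfl⟩
  have hG : G.PDPdual m = c.numColorings := hc
  rw [hG]
  omega
end
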